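/- Let H be a symmetric n×n real matrix, g a nonzero vector in ℝ^n, and δ ≥ 0. Consider the (n+1)×(n+1) symmetric block matrix F = [[H, g], [gᵀ, -δ]]. Then the smallest eigenvalue of F is strictly less than -δ. -/

import Mathlib

open Matrix

lemma rayleigh_lower {m : Type*} [Fintype m] [DecidableEq m]
    {A : Matrix m m ℝ} (hA : A.IsHermitian) {c : ℝ}
    (h : ∀ i, c ≤ hA.eigenvalues i) (x : m → ℝ) :
    c * (x ⬝ᵥ x) ≤ x ⬝ᵥ (A *ᵥ x) := by
  set U : Matrix m m ℝ := (hA.eigenvectorUnitary : Matrix m m ℝ) with hU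
  have hstar : star U = Uᵀ := conjTranspose_eq_transpose_of_trivial U
  have hUU : U * Uᵀ = 1 := by
    rw [← hstar]; exact (Matrix.mem_unitaryGroup_iff).mp hA.eigenvectorUnitary.2
  set y : m → ℝ := Uᵀ *ᵥ x with hy
  have key : x ⬝ᵥ (A *ᵥ x) = ∑ i, hA.eigenvalues i * (y i)^2 := by
    conv_lhs => rw [hA.spectral_theorem, Unitary.conjStarAlgAut_apply, ← hU]
    rw [hstar, ← mulVec_mulVec, ← mulVec_mulVec, dotProduct_mulVec, ← mulVec_transpose]
    simp only [← hy, ← hU, dotProduct, mulVec_diagonal, Function.comp_apply,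
      RCLike.ofReal_real_eq_id, id_eq]
    exact Finset.sum_congr rfl fun i _ => by ring
  have norm_eq : y ⬝ᵥ y = x ⬝ᵥ x := by
    rw [hy, dotProduct_mulVec, ← mulVec_transpose, mulVec_mulVec, transpose_transpose, hUU, one_mulVec]
  have : c * (y ⬝ᵥ y) ≤ ∑ i, hA.eigenvalues i * (y i)^2 := by
    rw [dotProduct, Finset.mul_sum]
    refine Finset.sum_le_sum fun i _ => ?_
    have := mul_le_mul_of_nonneg_right (h i) (mul_self_nonneg (y i))
    simpa [pow_two] using this
  rw [key, ← norm_eq]; exact this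

/-- The homogenized matrix `F = [[H, g], [gᵀ, -δ]]`. -/
noncomputable def homog {n : ℕ} (H : Matrix (Fin n) (Fin n) ℝ) (g : Fin n → ℝ) (δ : ℝ) :
    Matrix (Fin (n + 1)) (Fin (n + 1)) ℝ :=
  Matrix.of fun i j =>
    if hi : (i : ℕ) < n then
      if hj : (j : ℕ) < n then H ⟨i, hi⟩ ⟨j, hj⟩ else g ⟨i, hi⟩
    else if hj : (j : ℕ) < n then g ⟨j, hj⟩ else -δ

lemma homog_cc {n : ℕ} (H : Matrix (Fin n) (Fin n) ℝ) (g : Fin n → ℝ) (δ : ℝ) (j k : Fin n) :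
    homog H g δ j.castSucc k.castSucc = H j k := by
  simp [homog, Fin.is_lt]

lemma homog_cl {n : ℕ} (H : Matrix (Fin n) (Fin n) ℝ) (g : Fin n → ℝ) (δ : ℝ) (j : Fin n) :
    homog H g δ j.castSucc (Fin.last n) = g j := by
  simp [homog, Fin.is_lt]

lemma homog_lc {n : ℕ} (H : Matrix (Fin n) (Fin n) ℝ) (g : Fin n → ℝ) (δ : ℝ) (k : Fin n) :
    homog H g δ (Fin.last n) k.castSucc = g k := by
  simp [homog, Fin.is_lt]

lemma homog_ll {n : ℕ} (H : Matrix (Fin n) (Fin n) ℝ) (g : Fin n → ℝ) (δ : ℝ) :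
    homog H g δ (Fin.last n) (Fin.last n) = -δ := by
  simp [homog]

/-- The smallest eigenvalue of the homogenized matrix is strictly less than `-δ`. -/
theorem homog_lambdaMin_lt_neg_delta {n : ℕ}
    (H : Matrix (Fin n) (Fin n) ℝ) (hH : H.IsHermitian)
    (g : Fin n → ℝ) (hg : g ≠ 0) (δ : ℝ) (hδ : 0 ≤ δ)
    (hF : (homog H g δ).IsHermitian) :
    (⨅ i, hF.eigenvalues i) < -δ := by
  by_contra hcon
  push_neg at hcon
  have hbdd : BddBelow (Set.range hF.eigenvalues) := (Set.finite_range _).bddBelow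
  have hall : ∀ i, -δ ≤ hF.eigenvalues i := fun i => hcon.trans (ciInf_le hbdd i)
  obtain ⟨i₀, hi₀⟩ : ∃ i, g i ≠ 0 := Function.ne_iff.mp hg
  set a : ℝ := H i₀ i₀ + δ with ha
  set ε : ℝ := 1 / (|a| + 1) with hε
  have hεpos : 0 < ε := by positivity
  set t : ℝ := -(g i₀) * ε with ht
  set v : Fin (n+1) → ℝ := Fin.snoc (t • (Pi.single i₀ (1:ℝ) : Fin n → ℝ)) (1:ℝ) with hv
  have hQ : v ⬝ᵥ (homog H g δ) *ᵥ v = t^2 * H i₀ i₀ + 2*t*g i₀ - δ := by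
    have hrow : ∀ j : Fin (n+1), ((homog H g δ) *ᵥ v) j
        = t * homog H g δ j i₀.castSucc + homog H g δ j (Fin.last n) := by
      intro j
      rw [mulVec, dotProduct, Fin.sum_univ_castSucc]
      simp [hv, Pi.single_apply, mul_ite, Finset.sum_ite_eq', mul_comm]
    rw [dotProduct, Fin.sum_univ_castSucc]
    simp only [hrow]
    simp only [hrow, hv, Fin.snoc_castSucc, Fin.snoc_last, Pi.smul_apply, Pi.single_apply,
      smul_eq_mul, homog_cc, homog_cl, homog_lc, homog_ll]
    rw [Finset.sum_eq_single i₀ (by intro b _ hb; simp [hb]) (by simp)]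
    simp; ring
  have hvv : v ⬝ᵥ v = t^2 + 1 := by
    rw [dotProduct, Fin.sum_univ_castSucc]
    simp only [hv, Fin.snoc_castSucc, Fin.snoc_last, Pi.smul_apply, Pi.single_apply, smul_eq_mul]
    rw [Finset.sum_eq_single i₀ (by intro b _ hb; simp [hb]) (by simp)]
    simp; ring
  have hray := rayleigh_lower hF hall v
  rw [hQ, hvv] at hray
  -- hray : -δ * (t^2+1) ≤ t^2 * H i₀ i₀ + 2*t*g i₀ - δ
  -- i.e. 0 ≤ t^2 * a + 2 t g i₀
  have h1 : 0 ≤ t^2 * a + 2*t*g i₀ := by rw [ha]; nlinarith [hray]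
  have hg2 : 0 < (g i₀)^2 := by positivity
  have h2 : t^2 * a + 2*t*g i₀ = (g i₀)^2 * ε * (ε * a - 2) := by rw [ht]; ring
  have h3 : ε * a - 2 < 0 := by
    have : ε * a ≤ ε * |a| := mul_le_mul_of_nonneg_left (le_abs_self a) hεpos.le
    have h4 : ε * |a| < 1 := by
      rw [hε, div_mul_eq_mul_div, one_mul, div_lt_one (by positivity)]
      linarith
    linarith
  nlinarith [mul_pos (mul_pos hg2 hεpos) (neg_pos.mpr h3)]
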